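/- arXiv:2302.08394 — 5 statements merged into one kernel-verified Lean document; each statement's English description precedes it below -/
import Mathlib

section
/- For every rooted tree T, A_T(x, 1-x) = 1 - p_T(x), where A_T is the admissible-subtree polynomial and p_T(x) = 1 - P_T(x,-1). -/
open MvPolynomial

/-- A rooted tree: a root node together with a list of branches. -/
inductive RTree : Type
  | node : List RTree → RTree

/-- A rooted forest: a finite (possibly empty) list of rooted trees. -/
abbrev RForest : Type := List RTree

namespace RTree

/-- Number of vertices of a rooted tree. -/
def size : RTree → ℕ
  | .node ts => 1 + (ts.attach.map fun s => size s.1).sum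

  decreasing_by
    all_goals
      simp only [RTree.node.sizeOf_spec]
      have := List.sizeOf_lt_of_mem s.2
      omega

/-- Number of leaves of a rooted tree. -/
def leafCount : RTree → ℕ
  | .node [] => 1
  | .node (t :: ts) => ((t :: ts).attach.map fun s => leafCount s.1).sum

  decreasing_by
    all_goals
      simp only [RTree.node.sizeOf_spec]
      have := List.sizeOf_lt_of_mem s.2
      omega

/-- The bivariate generating polynomial `P_T(x,y)` of leaf-induced subtrees of `T`,
counted by number of vertices (`X 0`) and number of leaves (`X 1`). -/
noncomputable def Ptree : RTree → MvPolynomial (Fin 2) ℤ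
  | .node [] => 1 + X 0 * X 1
  | .node (t :: ts) =>
      1 - X 0 + X 0 * ((t :: ts).attach.map fun s => Ptree s.1).prod

  decreasing_by
    all_goals
      simp only [RTree.node.sizeOf_spec]
      have := List.sizeOf_lt_of_mem s.2
      omega

/-- The polynomial `p_T(x) = 1 - P_T(x,-1)`. -/
noncomputable def pPol (T : RTree) : Polynomial ℤ :=
  1 - MvPolynomial.aeval ![Polynomial.X, -1] (Ptree T)

/-- The bivariate generating polynomial `S_T(x,y)` of subtrees of `T` (empty or connected
containing the root), counted by vertices (`X 0`) and boundary vertices (`X 1`). -/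
noncomputable def Stree : RTree → MvPolynomial (Fin 2) ℤ
  | .node ts => X 1 + X 0 * (ts.attach.map fun s => Stree s.1).prod

  decreasing_by
    all_goals
      simp only [RTree.node.sizeOf_spec]
      have := List.sizeOf_lt_of_mem s.2
      omega

/-- The bivariate generating polynomial `A_T(x,y)` of admissible subtrees of `T`,
counted by vertices (`X 0`) and boundary vertices (`X 1`). -/
noncomputable def Atree : RTree → MvPolynomial (Fin 2) ℤ
  | .node [] => X 1
  | .node (t :: ts) =>
      X 1 + X 0 * ((t :: ts).attach.map fun s => Atree s.1).prod

  decreasing_by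
    all_goals
      simp only [RTree.node.sizeOf_spec]
      have := List.sizeOf_lt_of_mem s.2
      omega

/-- The trivariate polynomial `M_T(x,y,z)` (with `x = X 0`, `y = X 1`, `z = X 2`). -/
noncomputable def Mtree : RTree → MvPolynomial (Fin 3) ℤ
  | .node ts =>
      Polynomial.aeval (X 2) (pPol (.node ts)).divX +
        X 0 * ∑ i : Fin ts.length,
          Mtree (ts.get i) *
            ∏ j ∈ Finset.univ.erase i,
              MvPolynomial.rename Fin.castSucc (Atree (ts.get j))
  decreasing_by
    simp only [RTree.node.sizeOf_spec]
    have h : sizeOf (ts.get i) < sizeOf ts := List.sizeOf_lt_of_mem (List.get_mem ts i)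
    omega

/-- Number of vertices in the stem of a rooted tree. -/
def stemCount : RTree → ℕ
  | .node [t] => 1 + stemCount t
  | .node _ => 1

/-- Isomorphism of rooted trees. -/
def Iso : RTree → RTree → Prop
  | .node ts, .node us =>
      ∃ σ : Fin ts.length ≃ Fin us.length,
        ∀ i : Fin ts.length, Iso (ts.get i) (us.get (σ i))
  decreasing_by
    simp only [RTree.node.sizeOf_spec]
    have h : sizeOf (ts.get i) < sizeOf ts := List.sizeOf_lt_of_mem (List.get_mem ts i)
    omega

end RTree

namespace RForest

open RTree

/-- Number of vertices of a rooted forest. -/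
def size (F : RForest) : ℕ := (F.map RTree.size).sum

/-- Number of leaves of a rooted forest. -/
def leafCount (F : RForest) : ℕ := (F.map RTree.leafCount).sum

/-- The polynomial `P_F` of a rooted forest: product over components. -/
noncomputable def Pforest (F : RForest) : MvPolynomial (Fin 2) ℤ := (F.map Ptree).prod

/-- The polynomial `S_F` of a rooted forest: product over components. -/
noncomputable def Sforest (F : RForest) : MvPolynomial (Fin 2) ℤ := (F.map Stree).prod

/-- Number of vertices in the stem of a rooted forest (`0` unless the forest is a tree). -/
def stemCount : RForest → ℕ
  | [T] => RTree.stemCount T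
  | _ => 0

/-- Isomorphism of rooted forests: a matching of the components by isomorphisms. -/
def Iso (F G : RForest) : Prop :=
  ∃ σ : Fin F.length ≃ Fin G.length,
    ∀ i : Fin F.length, RTree.Iso (F.get i) (G.get (σ i))

end RForest

lemma key_AP : ∀ T : RTree,
    MvPolynomial.aeval ![Polynomial.X, 1 - Polynomial.X] (RTree.Atree T) =
      MvPolynomial.aeval ![Polynomial.X, (-1 : Polynomial ℤ)] (RTree.Ptree T)
  | .node [] => by
      simp [RTree.Atree, RTree.Ptree]
      ring
  | .node (t :: ts) => by
      rw [show RTree.Atree (.node (t :: ts)) =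
          X 1 + X 0 * ((t :: ts).attach.map fun s => RTree.Atree s.1).prod from by
            rw [RTree.Atree]]
      rw [show RTree.Ptree (.node (t :: ts)) =
          1 - X 0 + X 0 * ((t :: ts).attach.map fun s => RTree.Ptree s.1).prod from by
            rw [RTree.Ptree]]
      simp only [map_add, map_sub, map_mul, map_one, MvPolynomial.aeval_X,
        Matrix.cons_val_zero, Matrix.cons_val_one, Matrix.head_cons,
        map_list_prod, List.map_map]
      have h := congr_arg List.prod
        (List.map_congr_left (l := (t :: ts).attach)
          (f := (MvPolynomial.aeval ![Polynomial.X, 1 - Polynomial.X]) ∘ fun s => RTree.Atree s.1)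
          (g := (MvPolynomial.aeval ![Polynomial.X, (-1 : Polynomial ℤ)]) ∘ fun s => RTree.Ptree s.1)
          (fun s _ => key_AP s.1))
      rw [h]
  decreasing_by
    all_goals
      simp only [RTree.node.sizeOf_spec]
      have := List.sizeOf_lt_of_mem s.2
      omega

theorem stmt6 (T : RTree) :
    MvPolynomial.aeval ![Polynomial.X, 1 - Polynomial.X] (RTree.Atree T) =
      1 - RTree.pPol T := by
  rw [key_AP, RTree.pPol]
  ring
end

section
/- For a rooted forest F, let s denote the number of vertices in the stem of F (with s = 0 if F has zero or at least two components). Then -∂P_F/∂x evaluated at (x,y) = (1,-1) equals s. -/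
open MvPolynomial

namespace Stmt8Aux

open RTree

noncomputable def ev : MvPolynomial (Fin 2) ℤ →ₐ[ℤ] ℤ := aeval ![(1:ℤ), -1]

lemma ev_X0 : ev (X 0) = 1 := by simp [ev]
lemma ev_X1 : ev (X 1) = -1 := by simp [ev]

lemma tree_ind (P : RTree → Prop)
    (h : ∀ ts, (∀ t ∈ ts, P t) → P (.node ts)) : ∀ T, P T := by
  have key : ∀ n (T : RTree), sizeOf T ≤ n → P T := by
    intro n
    induction n with
    | zero =>
      intro T hT
      cases T with
      | node ts => simp [RTree.node.sizeOf_spec] at hT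
    | succ n ih =>
      intro T hT
      cases T with
      | node ts =>
        apply h
        intro t ht
        apply ih
        have := List.sizeOf_lt_of_mem ht
        simp only [RTree.node.sizeOf_spec] at hT
        omega
  exact fun T => key (sizeOf T) T le_rfl

lemma attach_map (l : List RTree) (f : RTree → MvPolynomial (Fin 2) ℤ) :
    l.attach.map (fun s => f s.1) = l.map f := by
  simp

lemma ev_Ptree : ∀ T, ev (Ptree T) = 0 := by
  apply tree_ind
  intro ts ih
  cases ts with
  | nil => simp [Ptree, ev_X0, ev_X1]
  | cons t ts =>
    rw [Ptree, attach_map]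
    simp only [map_add, map_sub, map_one, map_mul, ev_X0, List.map_cons, List.prod_cons]
    have h0 : ev (Ptree t) = 0 := ih t (by simp)
    rw [h0, zero_mul, mul_zero]
    ring

lemma ev_prod_map (l : List RTree) (hl : l ≠ []) :
    ev (l.map Ptree).prod = 0 := by
  cases l with
  | nil => exact absurd rfl hl
  | cons t ts =>
    simp only [List.map_cons, List.prod_cons, map_mul, ev_Ptree, zero_mul]

lemma D_Ptree : ∀ T, ev (pderiv 0 (Ptree T)) = -(RTree.stemCount T : ℤ) := by
  apply tree_ind
  intro ts ih
  cases ts with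
  | nil =>
    rw [Ptree]
    simp only [map_add, pderiv_one, pderiv_mul, pderiv_X_self, pderiv_X_of_ne (by decide : (0:Fin 2) ≠ 1)]
    simp [RTree.stemCount, ev_X0, ev_X1]
  | cons t ts =>
    rw [Ptree, attach_map]
    simp only [map_sub, map_add, pderiv_one, pderiv_mul, pderiv_X_self, map_one, map_mul,
      ev_X0, one_mul, mul_one]
    cases ts with
    | nil =>
      simp only [List.map_cons, List.map_nil, List.prod_cons, List.prod_nil, mul_one,
        map_sub, map_add, map_mul, map_zero, map_one, zero_sub, ev_Ptree]
      have := ih t (by simp)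
      simp only [RTree.stemCount]
      push_cast
      omega
    | cons u us =>
      have hprod : ev ((t :: u :: us).map Ptree).prod = 0 := ev_prod_map _ (by simp)
      have hD : ev (pderiv 0 ((t :: u :: us).map Ptree).prod) = 0 := by
        simp only [List.map_cons, List.prod_cons, pderiv_mul, map_add, map_mul, ev_Ptree,
          zero_mul, mul_zero]
        ring
      simp only [map_sub, map_add, map_zero, map_one, hprod, hD]
      have hs : RTree.stemCount (.node (t :: u :: us)) = 1 := rfl
      rw [hs]
      ring

end Stmt8Aux

theorem stmt8 (F : RForest) :
    -(MvPolynomial.aeval ![(1 : ℤ), -1]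
        (MvPolynomial.pderiv (0 : Fin 2) (RForest.Pforest F))) =
      (RForest.stemCount F : ℤ) := by
  open Stmt8Aux RTree in
  show -(ev (pderiv 0 (RForest.Pforest F))) = _
  cases F with
  | nil =>
    simp [RForest.Pforest, RForest.stemCount]
  | cons T F =>
    cases F with
    | nil =>
      simp only [RForest.Pforest, List.map_cons, List.map_nil, List.prod_cons, List.prod_nil,
        mul_one]
      rw [D_Ptree]
      simp [RForest.stemCount]
    | cons U F =>
      have hs : RForest.stemCount (T :: U :: F) = 0 := rfl
      rw [hs]
      simp only [RForest.Pforest, List.map_cons, List.prod_cons, pderiv_mul, map_add, map_mul,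
        ev_Ptree, zero_mul, mul_zero]
      norm_num
end

section
/- Let F be a nonempty rooted forest. Then the polynomial P_F(x,y) is irreducible in ℂ[x,y] if and only if F is a tree (i.e., has exactly one component). -/
open MvPolynomial

namespace Stmt9Aux

open Polynomial RTree

noncomputable def Φ : MvPolynomial (Fin 2) ℤ →+* Polynomial (Polynomial ℂ) :=
  (MvPolynomial.aeval ![Polynomial.C Polynomial.X, Polynomial.X] :
    MvPolynomial (Fin 2) ℤ →ₐ[ℤ] Polynomial (Polynomial ℂ)).toRingHom

@[simp] lemma Φ_X0 : Φ (MvPolynomial.X 0) = Polynomial.C Polynomial.X := by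
  simp [Φ]

@[simp] lemma Φ_X1 : Φ (MvPolynomial.X 1) = Polynomial.X := by
  simp [Φ]

lemma Φ_Ptree_nil : Φ (Ptree (.node [])) = 1 + Polynomial.C Polynomial.X * Polynomial.X := by
  rw [Ptree]
  simp [Φ]

lemma Φ_Ptree_cons (t : RTree) (ts : List RTree) :
    Φ (Ptree (.node (t :: ts))) =
      1 - Polynomial.C Polynomial.X +
        Polynomial.C Polynomial.X * ((t :: ts).map fun s => Φ (Ptree s)).prod := by
  rw [Ptree]
  rw [map_add, map_sub, map_one, map_mul, Φ_X0, map_list_prod]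
  congr 2
  rw [List.map_map]
  exact congrArg List.prod (List.attach_map_val (f := fun s => Φ (Ptree s)))

lemma size_node (ts : List RTree) : size (.node ts) = 1 + (ts.map size).sum := by
  rw [size]
  congr 1
  exact congrArg List.sum (List.attach_map_val (f := fun s => size s))

lemma leafCount_nil : leafCount (.node []) = 1 := by rw [leafCount]

lemma leafCount_cons (t : RTree) (ts : List RTree) :
    leafCount (.node (t :: ts)) = ((t :: ts).map leafCount).sum := by
  rw [leafCount]
  exact congrArg List.sum (List.attach_map_val (f := fun s => leafCount s))

lemma sizeOf_mem_le {s : RTree} {ts : List RTree} {n : ℕ} (hs : s ∈ ts)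
    (h : sizeOf (RTree.node ts) ≤ n + 1) : sizeOf s ≤ n := by
  have h1 := List.sizeOf_lt_of_mem hs
  simp only [RTree.node.sizeOf_spec] at h
  omega

lemma one_le_leafCount (T : RTree) : 1 ≤ leafCount T := by
  have H : ∀ n (T : RTree), sizeOf T ≤ n → 1 ≤ leafCount T := by
    intro n
    induction n with
    | zero => intro T hT; rcases T with ⟨ts⟩; simp [RTree.node.sizeOf_spec] at hT
    | succ n ih =>
      rintro ⟨_ | ⟨t, ts⟩⟩ hT
      · rw [leafCount_nil]
      · rw [leafCount_cons]
        have ht : 1 ≤ leafCount t := ih t (sizeOf_mem_le List.mem_cons_self hT)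
        simp only [List.map_cons, List.sum_cons]
        omega
  exact H _ T le_rfl



noncomputable def ε : Polynomial (Polynomial ℂ) →+* Polynomial ℂ :=
  Polynomial.mapRingHom (Polynomial.evalRingHom (1 : ℂ))

lemma stemCount_nil : stemCount (.node []) = 1 := by
  rw [stemCount]
  intro t h
  simp at h

lemma stemCount_single (t : RTree) : stemCount (.node [t]) = 1 + stemCount t := by
  rw [stemCount]

lemma stemCount_pair (t t' : RTree) (ts : List RTree) :
    stemCount (.node (t :: t' :: ts)) = 1 := by
  rw [stemCount]
  intro s h
  simp at h

def FACT (T : RTree) : Prop :=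
  (Φ (Ptree T)).leadingCoeff = Polynomial.X ^ size T ∧
  (Φ (Ptree T)).natDegree = leafCount T ∧
  ε (Φ (Ptree T)) = (1 + Polynomial.X) ^ leafCount T ∧
  Polynomial.constantCoeff (Φ (Ptree T)) = 1 ∧
  ((Φ (Ptree T)).eval (-1)).eval 1 = 0 ∧
  (Polynomial.derivative ((Φ (Ptree T)).eval (-1))).eval 1 = -(stemCount T : ℂ)

open Polynomial in
lemma prod_facts (l : List RTree) (h : ∀ s ∈ l, FACT s) :
    ((l.map fun s => Φ (Ptree s)).prod).leadingCoeff = Polynomial.X ^ (l.map size).sum ∧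
    ((l.map fun s => Φ (Ptree s)).prod).natDegree = (l.map leafCount).sum ∧
    ε ((l.map fun s => Φ (Ptree s)).prod) = (1 + Polynomial.X) ^ (l.map leafCount).sum ∧
    Polynomial.constantCoeff ((l.map fun s => Φ (Ptree s)).prod) = 1 ∧
    (l ≠ [] → (((l.map fun s => Φ (Ptree s)).prod).eval (-1)).eval 1 = 0) := by
  induction l with
  | nil => simp
  | cons t ts ih =>
    obtain ⟨h1, h2, h3, h4, h5, h6⟩ := h t List.mem_cons_self
    obtain ⟨i1, i2, i3, i4, i5⟩ := ih (fun s hs => h s (List.mem_cons_of_mem _ hs))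
    have hne_t : Φ (Ptree t) ≠ 0 :=
      leadingCoeff_ne_zero.mp (by rw [h1]; exact pow_ne_zero _ X_ne_zero)
    have hne_ts : ((ts.map fun s => Φ (Ptree s)).prod) ≠ 0 :=
      leadingCoeff_ne_zero.mp (by rw [i1]; exact pow_ne_zero _ X_ne_zero)
    simp only [List.map_cons, List.prod_cons, List.sum_cons]
    refine ⟨?_, ?_, ?_, ?_, ?_⟩
    · rw [leadingCoeff_mul, h1, i1, pow_add]
    · rw [natDegree_mul hne_t hne_ts, h2, i2]
    · rw [map_mul, h3, i3, pow_add]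
    · rw [map_mul, h4, i4, mul_one]
    · intro _
      rw [Polynomial.eval_mul, Polynomial.eval_mul, h5, zero_mul]

open Polynomial in
lemma FACT_all (T : RTree) : FACT T := by
  have H : ∀ n (T : RTree), sizeOf T ≤ n → FACT T := by
    intro n
    induction n with
    | zero => intro T hT; rcases T with ⟨ts⟩; simp [RTree.node.sizeOf_spec] at hT
    | succ n ih =>
      rintro ⟨_ | ⟨t, ts⟩⟩ hT
      · -- leaf case
        have hP : Φ (Ptree (.node [])) =
            Polynomial.C Polynomial.X * Polynomial.X + Polynomial.C 1 := by
          rw [Φ_Ptree_nil, map_one]; ring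
        have hXne : (Polynomial.X : Polynomial ℂ) ≠ 0 := X_ne_zero
        have hev : (Φ (Ptree (.node []))).eval (-1) = 1 - Polynomial.X := by
          rw [Φ_Ptree_nil]
          simp only [Polynomial.eval_add, Polynomial.eval_one, Polynomial.eval_mul,
            Polynomial.eval_C, Polynomial.eval_X]
          ring
        refine ⟨?_, ?_, ?_, ?_, ?_, ?_⟩
        · rw [hP, leadingCoeff_linear hXne, size_node]; simp
        · rw [hP, natDegree_linear hXne, leafCount_nil]
        · rw [Φ_Ptree_nil, leafCount_nil, pow_one]
          simp [ε]
        · rw [Φ_Ptree_nil]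
          simp
        · rw [hev]; simp
        · rw [hev, stemCount_nil]; simp
      · -- internal node case
        have hmem : ∀ s ∈ t :: ts, FACT s := fun s hs => ih s (sizeOf_mem_le hs hT)
        obtain ⟨h1, h2, h3, h4, h5, h6⟩ := hmem t List.mem_cons_self
        obtain ⟨p1, p2, p3, p4, p5⟩ := prod_facts (t :: ts) hmem
        obtain ⟨q1, q2, q3, q4, q5⟩ :=
          prod_facts ts (fun s hs => hmem s (List.mem_cons_of_mem _ hs))
        set Pr : Polynomial (Polynomial ℂ) := ((t :: ts).map fun s => Φ (Ptree s)).prod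
          with hPrdef
        have hPeq : Φ (Ptree (.node (t :: ts))) =
            1 - Polynomial.C Polynomial.X + Polynomial.C Polynomial.X * Pr := Φ_Ptree_cons t ts
        have hPrne : Pr ≠ 0 :=
          leadingCoeff_ne_zero.mp (by rw [p1]; exact pow_ne_zero _ X_ne_zero)
        have hL1 : 1 ≤ ((t :: ts).map leafCount).sum := by
          have := one_le_leafCount t
          simp only [List.map_cons, List.sum_cons]
          omega
        have hCXne : (Polynomial.C Polynomial.X : Polynomial (Polynomial ℂ)) ≠ 0 := by
          simpa using (X_ne_zero : (Polynomial.X : Polynomial ℂ) ≠ 0)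
        have hDne : Polynomial.C Polynomial.X * Pr ≠ 0 := mul_ne_zero hCXne hPrne
        have hDdeg : (Polynomial.C Polynomial.X * Pr).natDegree
            = ((t :: ts).map leafCount).sum := by
          rw [natDegree_mul hCXne hPrne, natDegree_C, p2, zero_add]
        have hlt : (1 - Polynomial.C Polynomial.X : Polynomial (Polynomial ℂ)).degree
            < (Polynomial.C Polynomial.X * Pr).degree := by
          have e1 : (1 - Polynomial.C Polynomial.X : Polynomial (Polynomial ℂ))
              = Polynomial.C (1 - Polynomial.X) := by rw [map_sub, map_one]
          rw [e1, degree_eq_natDegree hDne, hDdeg]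
          refine lt_of_le_of_lt degree_C_le ?_
          exact_mod_cast hL1
        have hqeq : (Φ (Ptree (.node (t :: ts)))).eval (-1)
            = 1 - Polynomial.X + Polynomial.X * (Pr.eval (-1)) := by
          rw [hPeq]
          simp
        have hPrsplit : Pr.eval (-1) = ((Φ (Ptree t)).eval (-1)) *
            (((ts.map fun s => Φ (Ptree s)).prod).eval (-1)) := by
          rw [hPrdef]
          simp
        refine ⟨?_, ?_, ?_, ?_, ?_, ?_⟩
        · rw [hPeq, leadingCoeff_add_of_degree_lt hlt, leadingCoeff_mul, leadingCoeff_C, p1,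
            size_node, pow_add, pow_one]
        · rw [hPeq, natDegree_eq_of_degree_eq (degree_add_eq_right_of_degree_lt hlt), hDdeg,
            leafCount_cons]
        · rw [hPeq, leafCount_cons, ← p3, map_add, map_sub, map_one, map_mul]
          have hCX1 : ε (Polynomial.C Polynomial.X) = 1 := by simp [ε]
          rw [hCX1]
          ring
        · rw [hPeq, map_add, map_sub, map_one, map_mul, p4, mul_one]
          simp
        · rw [hqeq, hPrsplit]
          simp only [Polynomial.eval_add, Polynomial.eval_sub, Polynomial.eval_mul,
            Polynomial.eval_one, Polynomial.eval_X, h5]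
          ring
        · rcases ts with _ | ⟨t', ts'⟩
          · rw [hqeq, hPrsplit]
            simp only [List.map_nil, List.prod_nil, Polynomial.eval_one, mul_one,
              derivative_add, derivative_sub, derivative_one, derivative_mul, derivative_X,
              Polynomial.eval_add, Polynomial.eval_sub, Polynomial.eval_mul,
              Polynomial.eval_one, Polynomial.eval_X, Polynomial.eval_zero, h5, h6]
            rw [stemCount_single]
            push_cast
            ring
          · have hq0 := q5 (List.cons_ne_nil t' ts')
            rw [hqeq, hPrsplit]
            simp only [derivative_add, derivative_sub, derivative_one, derivative_mul,
              derivative_X, Polynomial.eval_add, Polynomial.eval_sub, Polynomial.eval_mul,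
              Polynomial.eval_one, Polynomial.eval_X, h5, hq0, stemCount_pair]
            norm_num
  exact H _ T le_rfl

lemma one_le_stemCount (T : RTree) : 1 ≤ stemCount T := by
  rcases T with ⟨_ | ⟨t, _ | ⟨t', ts⟩⟩⟩
  · rw [stemCount_nil]
  · rw [stemCount_single]; omega
  · rw [stemCount_pair]

lemma natDegree_one_add_X : (1 + Polynomial.X : Polynomial ℂ).natDegree = 1 := by
  have h : (1 + Polynomial.X : Polynomial ℂ) = Polynomial.X + Polynomial.C 1 := by
    rw [Polynomial.C_1, add_comm]
  rw [h, Polynomial.natDegree_X_add_C]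

open Polynomial in
lemma unit_factor (T : RTree) (A B : Polynomial (Polynomial ℂ))
    (hAB : Φ (Ptree T) = A * B)
    (hB : ((B.eval (-1)).eval 1) ≠ 0) : IsUnit B := by
  obtain ⟨f1, f2, f3, f4, f5, f6⟩ := FACT_all T
  have hL1 : 1 ≤ leafCount T := one_le_leafCount T
  have hmap : ε A * ε B = (1 + Polynomial.X) ^ leafCount T := by
    rw [← map_mul, ← hAB, f3]
  have hBev : (ε B).eval (-1) ≠ 0 := by
    have hcomm : (ε B).eval (-1) = (B.eval (-1)).eval 1 := by
      show ((B.map (evalRingHom 1)).eval (-1 : ℂ)) = _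
      have hneg : (-1 : ℂ) = (Polynomial.evalRingHom (1 : ℂ)) (-1 : Polynomial ℂ) := by simp
      rw [hneg, Polynomial.eval_map, Polynomial.eval₂_at_apply]
      simp
    rw [hcomm]; exact hB
  have hdegB0 : (ε B).natDegree = 0 := by
    by_contra hd
    have hdeg : 0 < (ε B).degree :=
      natDegree_pos_iff_degree_pos.mp (Nat.pos_of_ne_zero hd)
    obtain ⟨z, hz⟩ := Complex.exists_root hdeg
    have h0 : (1 + z) ^ leafCount T = 0 := by
      have := congrArg (Polynomial.eval z) hmap
      rw [Polynomial.eval_mul, hz.eq_zero, mul_zero] at this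
      simpa using this.symm
    have hz1 : z = -1 := by
      have := pow_eq_zero_iff (Nat.one_le_iff_ne_zero.mp hL1) |>.mp h0
      linear_combination this
    rw [hz1] at hz
    exact hBev hz.eq_zero
  have hlc : A.leadingCoeff * B.leadingCoeff = Polynomial.X ^ size T := by
    rw [← leadingCoeff_mul, ← hAB, f1]
  have hone : (Polynomial.evalRingHom (1 : ℂ)) A.leadingCoeff
      * (Polynomial.evalRingHom (1 : ℂ)) B.leadingCoeff = 1 := by
    rw [← map_mul, hlc]
    simp
  have hη : (Polynomial.evalRingHom (1 : ℂ)) B.leadingCoeff ≠ 0 := by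
    intro h0
    rw [h0, mul_zero] at hone
    exact zero_ne_one hone
  have hBdeg0 : B.natDegree = 0 := by
    rw [← natDegree_map_of_leadingCoeff_ne_zero (Polynomial.evalRingHom (1 : ℂ)) hη]
    exact hdegB0
  have hBC : B = Polynomial.C (B.coeff 0) := eq_C_of_natDegree_eq_zero hBdeg0
  have hcc : Polynomial.constantCoeff A * Polynomial.constantCoeff B = 1 := by
    rw [← map_mul, ← hAB, f4]
  have : IsUnit (Polynomial.constantCoeff B) :=
    IsUnit.of_mul_eq_one _ (by rw [mul_comm]; exact hcc)
  rw [hBC]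
  exact Polynomial.isUnit_C.mpr this

open Polynomial in
lemma irr_tree (T : RTree) : Irreducible (Φ (Ptree T)) := by
  obtain ⟨f1, f2, f3, f4, f5, f6⟩ := FACT_all T
  constructor
  · intro hu
    have h0 := natDegree_eq_zero_of_isUnit (hu.map ε)
    rw [f3, natDegree_pow, natDegree_one_add_X, mul_one] at h0
    have := one_le_leafCount T
    omega
  · intro A B hAB
    by_cases hg : (B.eval (-1)).eval 1 = 0
    · refine Or.inl (unit_factor T B A (by rw [hAB, mul_comm]) ?_)
      intro hf0
      rw [hAB, Polynomial.eval_mul, derivative_mul] at f6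
      simp only [Polynomial.eval_add, Polynomial.eval_mul, hf0, hg, mul_zero, zero_mul,
        add_zero, zero_add] at f6
      have hstem := one_le_stemCount T
      have h0 : (stemCount T : ℂ) = 0 := by
        have h1 := f6.symm
        rwa [neg_eq_zero] at h1
      rw [Nat.cast_eq_zero] at h0
      omega
    · exact Or.inr (unit_factor T A B hAB hg)

lemma Φ_Pforest (F : RForest) : Φ (RForest.Pforest F) = (F.map fun T => Φ (Ptree T)).prod := by
  rw [RForest.Pforest, map_list_prod, List.map_map]
  rfl

lemma prod_map_pow {M : Type*} [CommMonoid M] (a : M) (l : List ℕ) :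
    (l.map fun n => a ^ n).prod = a ^ l.sum := by
  induction l with
  | nil => simp
  | cons x xs ih => simp [pow_add, ih]

lemma ε_Pforest (F : RForest) :
    ε (Φ (RForest.Pforest F)) = (1 + Polynomial.X) ^ RForest.leafCount F := by
  rw [Φ_Pforest, map_list_prod, List.map_map, RForest.leafCount]
  have h1 : F.map (ε ∘ fun T => Φ (Ptree T)) =
      F.map ((fun n => (1 + Polynomial.X) ^ n) ∘ leafCount) := by
    apply List.map_congr_left
    intro T _
    exact (FACT_all T).2.2.1
  rw [h1, ← List.map_map, prod_map_pow]

open Polynomial in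
lemma not_unit_forest (F : RForest) (hF : F ≠ []) : ¬ IsUnit (Φ (RForest.Pforest F)) := by
  intro hu
  have h0 := natDegree_eq_zero_of_isUnit (hu.map ε)
  rw [ε_Pforest, natDegree_pow, natDegree_one_add_X, mul_one] at h0
  rcases F with _ | ⟨t, ts⟩
  · exact hF rfl
  · have h1 := one_le_leafCount t
    rw [RForest.leafCount] at h0
    simp only [List.map_cons, List.sum_cons] at h0
    omega

noncomputable def Φc : MvPolynomial (Fin 2) ℂ →+* Polynomial (Polynomial ℂ) :=
  (MvPolynomial.aeval ![Polynomial.C Polynomial.X, Polynomial.X] :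
    MvPolynomial (Fin 2) ℂ →ₐ[ℂ] Polynomial (Polynomial ℂ)).toRingHom

noncomputable def Ψ : Polynomial (Polynomial ℂ) →+* MvPolynomial (Fin 2) ℂ :=
  Polynomial.eval₂RingHom
    (Polynomial.eval₂RingHom (MvPolynomial.C) (MvPolynomial.X 0)) (MvPolynomial.X 1)

lemma comp1 : Φc.comp Ψ = RingHom.id _ := by
  apply Polynomial.ringHom_ext'
  · apply Polynomial.ringHom_ext'
    · ext a
      simp [Ψ, Φc]
    · simp [Ψ, Φc]
  · simp [Ψ, Φc]

lemma comp2 : Ψ.comp Φc = RingHom.id _ := by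
  apply MvPolynomial.ringHom_ext
  · intro a
    simp [Ψ, Φc]
  · intro i
    fin_cases i <;> simp [Ψ, Φc]

noncomputable def E : MvPolynomial (Fin 2) ℂ ≃+* Polynomial (Polynomial ℂ) :=
  RingEquiv.ofRingHom Φc Ψ comp1 comp2

lemma E_apply (p : MvPolynomial (Fin 2) ℂ) : E p = Φc p := rfl

lemma E_map (p : MvPolynomial (Fin 2) ℤ) :
    E (MvPolynomial.map (Int.castRingHom ℂ) p) = Φ p := by
  have h : ((E : MvPolynomial (Fin 2) ℂ ≃+* Polynomial (Polynomial ℂ)) :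
      MvPolynomial (Fin 2) ℂ →+* Polynomial (Polynomial ℂ)).comp
      (MvPolynomial.map (Int.castRingHom ℂ)) = Φ := by
    apply MvPolynomial.ringHom_ext
    · intro a
      simp only [RingHom.coe_comp, Function.comp_apply, MvPolynomial.map_C]
      rw [show ((E : MvPolynomial (Fin 2) ℂ ≃+* Polynomial (Polynomial ℂ)) :
        MvPolynomial (Fin 2) ℂ →+* Polynomial (Polynomial ℂ)) = (Φc : _ →+* _) from rfl]
      simp [Φc, Φ]
    · intro i
      simp only [RingHom.coe_comp, Function.comp_apply, MvPolynomial.map_X]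
      rw [show ((E : MvPolynomial (Fin 2) ℂ ≃+* Polynomial (Polynomial ℂ)) :
        MvPolynomial (Fin 2) ℂ →+* Polynomial (Polynomial ℂ)) = (Φc : _ →+* _) from rfl]
      fin_cases i <;> simp [Φc, Φ]
  exact DFunLike.congr_fun h p

end Stmt9Aux
theorem stmt9 (F : RForest) (hF : F ≠ []) :
    Irreducible (MvPolynomial.map (Int.castRingHom ℂ) (RForest.Pforest F)) ↔
      F.length = 1 := by
  have key : Irreducible (MvPolynomial.map (Int.castRingHom ℂ) (RForest.Pforest F)) ↔
      Irreducible (Stmt9Aux.Φ (RForest.Pforest F)) := by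
    rw [← Stmt9Aux.E_map]
    exact (MulEquiv.irreducible_iff
      (Stmt9Aux.E : MvPolynomial (Fin 2) ℂ ≃+* Polynomial (Polynomial ℂ))).symm
  rw [key]
  constructor
  · intro hirr
    rcases F with _ | ⟨t, ts⟩
    · exact absurd rfl hF
    rcases ts with _ | ⟨t', ts'⟩
    · rfl
    · exfalso
      have hsplit : Stmt9Aux.Φ (RForest.Pforest (t :: t' :: ts')) =
          Stmt9Aux.Φ (RTree.Ptree t) * Stmt9Aux.Φ (RForest.Pforest (t' :: ts')) := by
        rw [RForest.Pforest, List.map_cons, List.prod_cons, map_mul]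
        rfl
      have h1 : ¬ IsUnit (Stmt9Aux.Φ (RTree.Ptree t)) := (Stmt9Aux.irr_tree t).not_isUnit
      have h2 : ¬ IsUnit (Stmt9Aux.Φ (RForest.Pforest (t' :: ts'))) :=
        Stmt9Aux.not_unit_forest _ (by simp)
      rcases hirr.isUnit_or_isUnit hsplit with h | h
      exacts [h1 h, h2 h]
  · intro hlen
    obtain ⟨T, rfl⟩ := List.length_eq_one_iff.mp hlen
    have hsingle : RForest.Pforest [T] = RTree.Ptree T := by simp [RForest.Pforest]
    rw [hsingle]
    exact Stmt9Aux.irr_tree T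
end

section
/- The polynomial invariant S is complete for rooted forests: two rooted forests F_1 and F_2 satisfy S_{F_1} = S_{F_2} if and only if F_1 and F_2 are isomorphic as rooted forests. -/
open MvPolynomial

namespace RTree

lemma Stree_node (ts : List RTree) :
    Stree (node ts) = X 1 + X 0 * (ts.map Stree).prod := by
  rw [Stree, List.attach_map_val (l := ts) (f := Stree)]

lemma size_node (ts : List RTree) : size (node ts) = 1 + (ts.map size).sum := by
  rw [size, List.attach_map_val]

lemma Iso_node (ts us : List RTree) : Iso (node ts) (node us) ↔
    ∃ σ : Fin ts.length ≃ Fin us.length,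
        ∀ i : Fin ts.length, Iso (ts.get i) (us.get (σ i)) := by
  rw [Iso.eq_1]

lemma sizeOf_lt_node {t : RTree} {ts : List RTree} (h : t ∈ ts) :
    sizeOf t < sizeOf (node ts) := by
  simp only [RTree.node.sizeOf_spec]
  have := List.sizeOf_lt_of_mem h
  omega

noncomputable def Phi : MvPolynomial (Fin 2) ℤ →ₐ[ℤ] Polynomial (Polynomial ℤ) :=
  aeval ![Polynomial.X, Polynomial.C Polynomial.X]

@[simp] lemma Phi_X0 : Phi (X 0) = Polynomial.X := by simp [Phi]
@[simp] lemma Phi_X1 : Phi (X 1) = Polynomial.C Polynomial.X := by simp [Phi]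

noncomputable def ST (T : RTree) : Polynomial (Polynomial ℤ) := Phi (Stree T)

lemma ST_node (ts : List RTree) :
    ST (node ts) = Polynomial.C Polynomial.X + Polynomial.X * (ts.map ST).prod := by
  unfold ST
  rw [Stree_node, map_add, map_mul, Phi_X0, Phi_X1, map_list_prod, List.map_map]
  rfl

lemma monic_list_prod (l : List (Polynomial (Polynomial ℤ))) (h : ∀ p ∈ l, p.Monic) :
    l.prod.Monic := by
  induction l with
  | nil => simp [Polynomial.monic_one]
  | cons a t ih =>
    rw [List.prod_cons]
    exact (h a (by simp)).mul (ih fun p hp => h p (List.mem_cons_of_mem _ hp))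

lemma natDegree_list_prod (l : List (Polynomial (Polynomial ℤ))) (h : ∀ p ∈ l, p.Monic) :
    l.prod.natDegree = (l.map Polynomial.natDegree).sum := by
  induction l with
  | nil => simp
  | cons a t ih =>
    rw [List.prod_cons, List.map_cons, List.sum_cons,
      Polynomial.Monic.natDegree_mul (h a (by simp))
        (monic_list_prod t fun p hp => h p (List.mem_cons_of_mem _ hp)),
      ih fun p hp => h p (List.mem_cons_of_mem _ hp)]

theorem ST_monic_natDegree : ∀ T : RTree, (ST T).Monic ∧ (ST T).natDegree = size T
  | .node ts => by
    have IH : ∀ t ∈ ts, (ST t).Monic ∧ (ST t).natDegree = size t := fun t ht =>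
      have : sizeOf t < sizeOf (node ts) := sizeOf_lt_node ht
      ST_monic_natDegree t
    have hmem : ∀ p ∈ ts.map ST, p.Monic := by
      intro p hp
      obtain ⟨t, ht, rfl⟩ := List.mem_map.mp hp
      exact (IH t ht).1
    have hprodmonic : (ts.map ST).prod.Monic := monic_list_prod _ hmem
    have hXp : (Polynomial.X * (ts.map ST).prod).Monic :=
      Polynomial.monic_X.mul hprodmonic
    have hdeg : (Polynomial.X * (ts.map ST).prod).natDegree = 1 + (ts.map size).sum := by
      rw [Polynomial.monic_X.natDegree_mul hprodmonic, Polynomial.natDegree_X,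
        natDegree_list_prod _ hmem, List.map_map, Function.comp_def]
      have hc : List.map (fun t => (ST t).natDegree) ts = List.map size ts :=
        List.map_congr_left fun t ht => (IH t ht).2
      rw [hc]
    have hlt : (Polynomial.C (Polynomial.X : Polynomial ℤ)).degree <
        (Polynomial.X * (ts.map ST).prod).degree := by
      apply lt_of_le_of_lt (Polynomial.degree_C_le)
      rw [Polynomial.degree_eq_natDegree hXp.ne_zero, hdeg]
      exact_mod_cast Nat.succ_le_iff.mp (Nat.le_add_right 1 _)
    constructor
    · rw [ST_node]
      exact hXp.add_of_right hlt
    · rw [ST_node, Polynomial.natDegree_add_eq_right_of_degree_lt hlt, hdeg, size_node]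
  termination_by T => sizeOf T


lemma size_pos (T : RTree) : 0 < size T := by
  cases T with
  | node ts => rw [size_node]; omega

lemma ST_coeff_zero (T : RTree) : (ST T).coeff 0 = Polynomial.X := by
  cases T with
  | node ts =>
    rw [ST_node]
    simp [Polynomial.mul_coeff_zero]

noncomputable def phi0 : Polynomial ℤ →+* ℤ := Polynomial.evalRingHom 0

theorem ST_map_phi0 : ∀ T : RTree, (ST T).map phi0 = Polynomial.X ^ size T
  | .node ts => by
    have IH : ∀ t ∈ ts, (ST t).map phi0 = Polynomial.X ^ size t := fun t ht =>
      have : sizeOf t < sizeOf (node ts) := sizeOf_lt_node ht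
      ST_map_phi0 t
    rw [ST_node, Polynomial.map_add, Polynomial.map_mul, Polynomial.map_C, Polynomial.map_X]
    have h1 : phi0 Polynomial.X = 0 := by simp [phi0]
    rw [h1, map_zero, zero_add]
    have h2 : ((ts.map ST).prod).map phi0 = Polynomial.X ^ (ts.map size).sum := by
      rw [← Polynomial.coe_mapRingHom, map_list_prod, List.map_map]
      have : List.map ((Polynomial.mapRingHom phi0) ∘ ST) ts
          = List.map (fun t => Polynomial.X ^ size t) ts := by
        apply List.map_congr_left
        intro t ht
        simpa using IH t ht
      rw [this]
      clear IH this
      induction ts with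
      | nil => simp
      | cons a l ih => rw [List.map_cons, List.prod_cons, List.map_cons, List.sum_cons, pow_add, ih]
    rw [h2, size_node, pow_add, pow_one]
  termination_by T => sizeOf T


lemma irred_of (f : Polynomial (Polynomial ℤ)) (hm : f.Monic) (hd : 0 < f.natDegree)
    (h0 : f.coeff 0 = Polynomial.X)
    (hmap : f.map phi0 = Polynomial.X ^ f.natDegree) : Irreducible f := by
  constructor
  · exact Polynomial.not_isUnit_of_natDegree_pos f hd
  · intro a b hab
    by_contra hcon
    push_neg at hcon
    obtain ⟨hna, hnb⟩ := hcon
    have hlc : a.leadingCoeff * b.leadingCoeff = 1 := by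
      rw [← Polynomial.leadingCoeff_mul, ← hab, hm]
    have hua : IsUnit a.leadingCoeff := IsUnit.of_mul_eq_one _ hlc
    have hub : IsUnit b.leadingCoeff := IsUnit.of_mul_eq_one _ (by rw [mul_comm] at hlc; exact hlc)
    have hdega : 0 < a.natDegree := by
      rcases Nat.eq_zero_or_pos a.natDegree with h | h
      · obtain ⟨c, hc⟩ := Polynomial.natDegree_eq_zero.mp h
        exfalso
        apply hna
        rw [← hc]
        rw [← hc, Polynomial.leadingCoeff_C] at hua
        exact Polynomial.isUnit_C.mpr hua
      · exact h
    have hdegb : 0 < b.natDegree := by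
      rcases Nat.eq_zero_or_pos b.natDegree with h | h
      · obtain ⟨c, hc⟩ := Polynomial.natDegree_eq_zero.mp h
        exfalso
        apply hnb
        rw [← hc]
        rw [← hc, Polynomial.leadingCoeff_C] at hub
        exact Polynomial.isUnit_C.mpr hub
      · exact h
    have key : ∀ p : Polynomial (Polynomial ℤ), 0 < p.natDegree →
        IsUnit p.leadingCoeff → (p.map phi0) ∣ Polynomial.X ^ f.natDegree →
        Polynomial.X ∣ p.coeff 0 := by
      intro p hdp hup hdvd
      have hne : phi0 p.leadingCoeff ≠ 0 := (hup.map phi0).ne_zero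
      have hdeg : (p.map phi0).natDegree = p.natDegree :=
        Polynomial.natDegree_map_of_leadingCoeff_ne_zero phi0 hne
      have hnu : ¬ IsUnit (p.map phi0) :=
        Polynomial.not_isUnit_of_natDegree_pos _ (hdeg ▸ hdp)
      obtain ⟨i, hin, hass⟩ := (dvd_prime_pow Polynomial.prime_X f.natDegree).mp hdvd
      have hi : i ≠ 0 := by
        rintro rfl
        exact hnu (associated_one_iff_isUnit.mp (by simpa using hass))
      have hXdvd : Polynomial.X ∣ p.map phi0 :=
        dvd_trans (dvd_pow_self _ hi) hass.symm.dvd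
      have hc0 : (p.map phi0).coeff 0 = 0 := Polynomial.X_dvd_iff.mp hXdvd
      rw [Polynomial.coeff_map] at hc0
      rw [Polynomial.X_dvd_iff, Polynomial.coeff_zero_eq_eval_zero]
      exact hc0
    have hmapmul : (a.map phi0) * (b.map phi0) = Polynomial.X ^ f.natDegree := by
      rw [← Polynomial.map_mul, ← hab, hmap]
    have hda := key a hdega hua ⟨b.map phi0, hmapmul.symm⟩
    have hdb := key b hdegb hub ⟨a.map phi0, by rw [mul_comm]; exact hmapmul.symm⟩
    obtain ⟨p, hp⟩ := hda
    obtain ⟨q, hq⟩ := hdb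
    have : Polynomial.X = Polynomial.X * (Polynomial.X * (p * q)) := by
      have hc : f.coeff 0 = a.coeff 0 * b.coeff 0 := by
        rw [hab, Polynomial.mul_coeff_zero]
      rw [h0, hp, hq] at hc
      exact hc.trans (by ring)
    have h1 : (1 : Polynomial ℤ) = Polynomial.X * (p * q) :=
      mul_left_cancel₀ Polynomial.X_ne_zero (by rw [← this, mul_one])
    exact Polynomial.not_isUnit_X (IsUnit.of_mul_eq_one _ h1.symm)

lemma ST_irred (T : RTree) : Irreducible (ST T) := by
  have hm := (ST_monic_natDegree T).1
  have hdeg := (ST_monic_natDegree T).2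
  exact irred_of _ hm (hdeg ▸ size_pos T) (ST_coeff_zero T) (by rw [hdeg, ST_map_phi0])


lemma perm_exists_equiv {β : Type _} {l₁ l₂ : List β} (h : l₁.Perm l₂) :
    ∃ σ : Fin l₁.length ≃ Fin l₂.length, ∀ i, l₁.get i = l₂.get (σ i) := by
  induction h with
  | nil => exact ⟨Equiv.refl _, fun i => i.elim0⟩
  | @cons x t₁ t₂ hperm ih =>
    obtain ⟨σ', hσ'⟩ := ih
    refine ⟨(_root_.finSuccEquiv t₁.length).trans
      ((Equiv.optionCongr σ').trans (_root_.finSuccEquiv t₂.length).symm), fun i => ?_⟩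
    refine Fin.cases ?_ (fun j => ?_) i
    · simp
    · simpa using hσ' j
  | @swap x y l =>
    refine ⟨Equiv.swap (⟨0, by simp⟩ : Fin (y :: x :: l).length) ⟨1, by simp⟩, fun i => ?_⟩
    rcases i with ⟨iv, hi⟩
    rcases iv with _ | iv
    · simp [Equiv.swap_apply_def, Fin.ext_iff]
    · rcases iv with _ | iv
      · simp [Equiv.swap_apply_def, Fin.ext_iff]
      · simp [Equiv.swap_apply_def, Fin.ext_iff]
  | @trans l₁ l₂ l₃ h₁ h₂ ih₁ ih₂ =>
    obtain ⟨σ₁, hσ₁⟩ := ih₁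
    obtain ⟨σ₂, hσ₂⟩ := ih₂
    exact ⟨σ₁.trans σ₂, fun i => (hσ₁ i).trans (hσ₂ (σ₁ i))⟩

lemma exists_equiv_of_prod_eq (l₁ l₂ : List RTree)
    (h : (l₁.map ST).prod = (l₂.map ST).prod) :
    ∃ σ : Fin l₁.length ≃ Fin l₂.length, ∀ i, ST (l₁.get i) = ST (l₂.get (σ i)) := by
  have hirr : ∀ (l : List RTree), ∀ p ∈ (↑(l.map ST) : Multiset (Polynomial (Polynomial ℤ))),
      Irreducible p := by
    intro l p hp
    rw [Multiset.mem_coe, List.mem_map] at hp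
    obtain ⟨t, _, rfl⟩ := hp
    exact ST_irred t
  have hassoc : Associated ((↑(l₁.map ST) : Multiset (Polynomial (Polynomial ℤ)))).prod
      ((↑(l₂.map ST) : Multiset (Polynomial (Polynomial ℤ)))).prod := by
    rw [Multiset.prod_coe, Multiset.prod_coe, h]
  have hrel := UniqueFactorizationMonoid.factors_unique (hirr l₁) (hirr l₂) hassoc
  have heq : (↑(l₁.map ST) : Multiset (Polynomial (Polynomial ℤ))) = ↑(l₂.map ST) := by
    rw [← Multiset.rel_eq]
    refine hrel.mono ?_
    intro p hp q hq hpq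
    rw [Multiset.mem_coe, List.mem_map] at hp hq
    obtain ⟨t, _, rfl⟩ := hp
    obtain ⟨u, _, rfl⟩ := hq
    exact Polynomial.eq_of_monic_of_associated (ST_monic_natDegree t).1 (ST_monic_natDegree u).1 hpq
  have hperm : (l₁.map ST).Perm (l₂.map ST) := Multiset.coe_eq_coe.mp heq
  obtain ⟨σ, hσ⟩ := perm_exists_equiv hperm
  have h₁ : (l₁.map ST).length = l₁.length := List.length_map _
  have h₂ : (l₂.map ST).length = l₂.length := List.length_map _
  refine ⟨(finCongr h₁.symm).trans (σ.trans (finCongr h₂)), fun i => ?_⟩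
  have := hσ (finCongr h₁.symm i)
  simpa [List.get_eq_getElem, List.getElem_map] using this

lemma list_map_prod_eq {M : Type _} [CommMonoid M] (l : List RTree) (f : RTree → M) :
    (l.map f).prod = ∏ i : Fin l.length, f (l.get i) := by
  conv_lhs => rw [← List.ofFn_get l]
  rw [List.map_ofFn, List.prod_ofFn]
  rfl

lemma prod_stree_eq (l₁ l₂ : List RTree) (σ : Fin l₁.length ≃ Fin l₂.length)
    (h : ∀ i, Stree (l₁.get i) = Stree (l₂.get (σ i))) :
    (l₁.map Stree).prod = (l₂.map Stree).prod := by
  rw [list_map_prod_eq, list_map_prod_eq, ← Equiv.prod_comp σ (fun j => Stree (l₂.get j))]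
  exact Finset.prod_congr rfl fun i _ => h i

theorem iso_of_ST_eq : ∀ T₁ T₂ : RTree, ST T₁ = ST T₂ → Iso T₁ T₂
  | .node ts, .node us, h => by
    rw [ST_node, ST_node] at h
    have h' : (ts.map ST).prod = (us.map ST).prod :=
      mul_left_cancel₀ Polynomial.X_ne_zero (add_left_cancel h)
    obtain ⟨σ, hσ⟩ := exists_equiv_of_prod_eq ts us h'
    rw [Iso_node]
    refine ⟨σ, fun i => ?_⟩
    have hlt : sizeOf (ts.get i) < sizeOf (node ts) :=
      sizeOf_lt_node (List.get_mem ts i)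
    exact iso_of_ST_eq _ _ (hσ i)
  termination_by T₁ _ _ => sizeOf T₁
  decreasing_by
    have : sizeOf ts[i.1] < sizeOf ts := List.sizeOf_lt_of_mem (List.getElem_mem i.2)
    omega

theorem stree_eq_of_iso : ∀ T₁ T₂ : RTree, Iso T₁ T₂ → Stree T₁ = Stree T₂
  | .node ts, .node us, h => by
    rw [Iso_node] at h
    obtain ⟨σ, hσ⟩ := h
    rw [Stree_node, Stree_node]
    have hpt : ∀ i : Fin ts.length, Stree (ts.get i) = Stree (us.get (σ i)) := fun i =>
      have : sizeOf (ts.get i) < sizeOf (node ts) :=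
        sizeOf_lt_node (List.get_mem ts i)
      stree_eq_of_iso _ _ (hσ i)
    have : (ts.map Stree).prod = (us.map Stree).prod := prod_stree_eq ts us σ hpt
    rw [this]
  termination_by T₁ _ _ => sizeOf T₁
  decreasing_by
    have : sizeOf ts[i.1] < sizeOf ts := List.sizeOf_lt_of_mem (List.getElem_mem i.2)
    omega

lemma phi_prod_stree (l : List RTree) :
    Phi ((l.map Stree).prod) = (l.map ST).prod := by
  rw [map_list_prod, List.map_map]
  rfl

end RTree

theorem stmt13 (F₁ F₂ : RForest) :
    RForest.Sforest F₁ = RForest.Sforest F₂ ↔ RForest.Iso F₁ F₂ := by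
  constructor
  · intro h
    have h' : (F₁.map RTree.ST).prod = (F₂.map RTree.ST).prod := by
      rw [← RTree.phi_prod_stree, ← RTree.phi_prod_stree]
      exact congrArg _ h
    obtain ⟨σ, hσ⟩ := RTree.exists_equiv_of_prod_eq F₁ F₂ h'
    exact ⟨σ, fun i => RTree.iso_of_ST_eq _ _ (hσ i)⟩
  · rintro ⟨σ, hσ⟩
    exact RTree.prod_stree_eq F₁ F₂ σ fun i => RTree.stree_eq_of_iso _ _ (hσ i)
end

section
/- For every rooted tree T, M_T(x, 1-x, x) = d/dx p_T(x), where p_T(x) = 1 - P_T(x, -1). -/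
open MvPolynomial

section Aux

open Polynomial RTree

lemma myDivX_X_mul (q : Polynomial ℤ) : (Polynomial.X * q).divX = q := by
  have h := Polynomial.X_mul_divX_add (Polynomial.X * q)
  simp at h
  exact h

lemma myDivX_X : (Polynomial.X : Polynomial ℤ).divX = 1 := by
  simpa using myDivX_X_mul 1

lemma myDerivProd {ι : Type} [DecidableEq ι] (s : Finset ι) (f : ι → Polynomial ℤ) :
    Polynomial.derivative (∏ i ∈ s, f i) =
      ∑ i ∈ s, Polynomial.derivative (f i) * ∏ j ∈ s.erase i, f j := by
  induction s using Finset.induction_on with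
  | empty => simp
  | @insert a s ha ih =>
    rw [Finset.prod_insert ha, derivative_mul, ih, Finset.sum_insert ha,
      Finset.erase_insert ha, Finset.mul_sum]
    congr 1
    refine Finset.sum_congr rfl fun i hi => ?_
    have hai : a ≠ i := fun h => ha (h ▸ hi)
    rw [Finset.erase_insert_of_ne hai,
      Finset.prod_insert (fun h => ha (Finset.mem_of_mem_erase h))]
    ring

lemma mySizeLt {t : RTree} {l : List RTree} (ht : t ∈ l) :
    sizeOf t < sizeOf (RTree.node l) := by
  simp only [RTree.node.sizeOf_spec]
  have := List.sizeOf_lt_of_mem ht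
  omega

lemma myAevalP (s : RTree) :
    MvPolynomial.aeval ![Polynomial.X, -1] (Ptree s) = 1 - pPol s := by
  rw [pPol]; ring

lemma myPPol_nil : pPol (.node []) = Polynomial.X := by
  rw [pPol, Ptree]
  simp

lemma myPPol_cons (t : RTree) (ts : List RTree) :
    pPol (.node (t :: ts)) =
      Polynomial.X *
        (1 - ∏ i : Fin (t :: ts).length, (1 - pPol ((t :: ts).get i))) := by
  rw [pPol, Ptree]
  rw [map_add, map_sub, map_mul, map_one, map_list_prod]
  simp only [List.map_map]
  have h1 : ((t :: ts).attach.map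
        ((MvPolynomial.aeval ![Polynomial.X, -1]) ∘ fun s => Ptree s.1))
      = (t :: ts).map (fun u => 1 - pPol u) := by
    rw [← List.attach_map_val (l := t :: ts) (f := fun u => 1 - pPol u)]
    exact List.map_congr_left (fun s _ => myAevalP s.1)
  rw [h1, ← Fin.prod_univ_fun_getElem]
  simp only [MvPolynomial.aeval_X, Matrix.cons_val_zero, List.get_eq_getElem]
  ring

lemma myAevalA_aux : ∀ (n : ℕ) (T : RTree), sizeOf T ≤ n →
    MvPolynomial.aeval ![Polynomial.X, 1 - Polynomial.X] (Atree T) = 1 - pPol T := by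
  intro n
  induction n with
  | zero =>
    intro T h
    obtain ⟨ts⟩ := T
    simp only [RTree.node.sizeOf_spec] at h
    omega
  | succ n ih =>
    intro T h
    obtain ⟨ts⟩ := T
    have hch : ∀ t ∈ ts, sizeOf t ≤ n := fun t ht => by
      have h1 := List.sizeOf_lt_of_mem ht
      simp only [RTree.node.sizeOf_spec] at h
      omega
    cases ts with
    | nil =>
      rw [Atree, myPPol_nil]
      simp
    | cons t ts =>
      rw [Atree, myPPol_cons]
      rw [map_add, map_mul, map_list_prod]
      simp only [List.map_map]
      have h1 : ((t :: ts).attach.map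
            ((MvPolynomial.aeval ![Polynomial.X, 1 - Polynomial.X]) ∘ fun s => Atree s.1))
          = (t :: ts).map (fun u => 1 - pPol u) := by
        rw [← List.attach_map_val (l := t :: ts) (f := fun u => 1 - pPol u)]
        exact List.map_congr_left (fun s _ => ih s.1 (hch s.1 s.2))
      rw [h1, ← Fin.prod_univ_fun_getElem]
      simp only [MvPolynomial.aeval_X, Matrix.cons_val_zero, Matrix.cons_val_one,
        Matrix.head_cons, List.get_eq_getElem]
      ring

lemma myAevalA (T : RTree) :
    MvPolynomial.aeval ![Polynomial.X, 1 - Polynomial.X] (Atree T) = 1 - pPol T :=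
  myAevalA_aux (sizeOf T) T le_rfl

lemma myCompCast :
    (![Polynomial.X, 1 - Polynomial.X, Polynomial.X] ∘ (Fin.castSucc : Fin 2 → Fin 3))
      = ![Polynomial.X, (1 - Polynomial.X : Polynomial ℤ)] := by
  funext i
  fin_cases i <;> rfl

lemma myAevalDivX (q : Polynomial ℤ) :
    MvPolynomial.aeval ![Polynomial.X, 1 - Polynomial.X, Polynomial.X]
      (Polynomial.aeval (MvPolynomial.X 2 : MvPolynomial (Fin 3) ℤ) q) = q := by
  rw [← Polynomial.aeval_algHom_apply]
  simp

lemma myMain_aux : ∀ (n : ℕ) (T : RTree), sizeOf T ≤ n →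
    MvPolynomial.aeval ![Polynomial.X, 1 - Polynomial.X, Polynomial.X] (RTree.Mtree T) =
      Polynomial.derivative (RTree.pPol T) := by
  intro n
  induction n with
  | zero =>
    intro T h
    obtain ⟨ts⟩ := T
    simp only [RTree.node.sizeOf_spec] at h
    omega
  | succ n ih =>
    intro T h
    obtain ⟨ts⟩ := T
    have hch : ∀ t ∈ ts, sizeOf t ≤ n := fun t ht => by
      have h1 := List.sizeOf_lt_of_mem ht
      simp only [RTree.node.sizeOf_spec] at h
      omega
    rw [Mtree]
    rw [map_add, map_mul, map_sum, myAevalDivX]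
    have hsum : ∀ i : Fin ts.length,
        MvPolynomial.aeval ![Polynomial.X, 1 - Polynomial.X, Polynomial.X]
            (Mtree (ts.get i) *
              ∏ j ∈ Finset.univ.erase i,
                MvPolynomial.rename Fin.castSucc (Atree (ts.get j)))
          = Polynomial.derivative (pPol (ts.get i)) *
              ∏ j ∈ Finset.univ.erase i, (1 - pPol (ts.get j)) := by
      intro i
      rw [map_mul, map_prod]
      congr 1
      · exact ih _ (hch _ (ts.get_mem i))
      · refine Finset.prod_congr rfl fun j _ => ?_
        rw [MvPolynomial.aeval_rename, myCompCast, myAevalA]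
    rw [Finset.sum_congr rfl fun i _ => hsum i]
    simp only [MvPolynomial.aeval_X, Matrix.cons_val_zero]
    cases ts with
    | nil =>
      simp [myPPol_nil, myDivX_X]
    | cons t ts =>
      rw [myPPol_cons]
      rw [myDivX_X_mul]
      rw [derivative_mul, derivative_X, one_mul, derivative_sub, derivative_one,
        myDerivProd]
      simp only [derivative_sub, derivative_one, zero_sub, neg_mul, Finset.sum_neg_distrib,
        mul_neg, neg_neg, List.get_eq_getElem]
      try ring

end Aux

theorem stmt15 (T : RTree) :
    MvPolynomial.aeval ![Polynomial.X, 1 - Polynomial.X, Polynomial.X] (RTree.Mtree T) =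
      Polynomial.derivative (RTree.pPol T) := myMain_aux (sizeOf T) T le_rfl
end
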